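/- Let S_1,…,S_m (m ≥ 2) be contracting similitudes of ℝ^w with ratios c_i ∈ (0,1), let K ⊆ ℝ^w be compact with S_i(K) ⊆ K for all i and S_i(K) ∩ S_j(K) = ∅ for i ≠ j, let π be the coding map and D the solution of Σ_{i=1}^m c_i^D = 1. Let s ∈ Σ and let N = (N_n) be a sequence of positive integers with lim_{M→∞} M² / (Σ_{n=1}^M N_n) = 0. Let ν be the Bernoulli (infinite product) measure on Σ with weights (c_1^D, …, c_m^D), let pr : Σ → Σ_N(s) be the bijection that fills the unconstrained positions of sequences in Σ_N(s) successively with the digits of its argument, and let μ = ν ∘ pr^{-1} ∘ π^{-1} be the pushforward of ν to Λ_N(s) = π(Σ_N(s)). Then for every x ∈ Λ_N(s), liminf_{ρ→0} log μ(B_ρ(x)) / log ρ ≥ D, where B_ρ(x) is the ball of radius ρ around x. -/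

import Mathlib

open Filter Set MeasureTheory

noncomputable section

/-- Addition of `1` modulo `m` on a digit. -/
def succDigit {m : ℕ} (x : Fin m) : Fin m :=
  ⟨(x.val + 1) % m, Nat.mod_lt _ ((Nat.zero_le _).trans_lt x.isLt)⟩

/-- The sequence `u` with `u 0 = 0` (the paper's `u_0 = 1`, shifted to `0`-based indexing)
and `u (i+1) = u i + N i + i + 2`. -/
def uSeq (N : ℕ → ℕ) : ℕ → ℕ
  | 0 => 0
  | i + 1 => uSeq N i + N i + i + 2

/-- The set `Σ_N(s)` of sequences `t` that agree with `s` on the blocks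
`{u_i, …, u_i + i}`, have `t_{u_i+i+1} = s_{u_i+i+1} + 1 (mod m)`, and are arbitrary
elsewhere. -/
def sigmaSet {m : ℕ} (s : ℕ → Fin m) (N : ℕ → ℕ) : Set (ℕ → Fin m) :=
  {t | ∀ i : ℕ,
    (∀ k : ℕ, uSeq N i ≤ k → k ≤ uSeq N i + i → t k = s k) ∧
    t (uSeq N i + i + 1) = succDigit (s (uSeq N i + i + 1))}

/-- The composition `S_{s_1} ∘ ⋯ ∘ S_{s_{n+1}}` of the maps along the first `n + 1`
digits of the sequence `s` (with `0`-based indexing). -/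
def iterComp {m : ℕ} {E : Type*} (S : Fin m → E → E) (s : ℕ → Fin m) : ℕ → E → E
  | 0 => S (s 0)
  | n + 1 => iterComp S s n ∘ S (s (n + 1))

/-- The positions constrained in the definition of `Σ_N(s)`: those in some block
`{u_i, …, u_i + i + 1}`. -/
def constrainedPos (N : ℕ → ℕ) (k : ℕ) : Prop :=
  ∃ i, uSeq N i ≤ k ∧ k ≤ uSeq N i + i + 1

/-- The positions at which the digit of `s` is increased by `1 (mod m)`. -/
def flipPos (N : ℕ → ℕ) (k : ℕ) : Prop :=
  ∃ i, k = uSeq N i + i + 1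

open Classical in
/-- The bijection `pr : Σ → Σ_N(s)` filling the unconstrained positions of sequences in
`Σ_N(s)` successively with the digits of its argument. -/
def prMap {m : ℕ} (s : ℕ → Fin m) (N : ℕ → ℕ) (a : ℕ → Fin m) : ℕ → Fin m :=
  fun k =>
    if flipPos N k then succDigit (s k)
    else if constrainedPos N k then s k
    else a (Nat.count (fun j => ¬ constrainedPos N j) k)

/-! ### Auxiliary lemmas: combinatorics of `uSeq` and `constrainedPos` -/

lemma uSeq_succ_eq (N : ℕ → ℕ) (i : ℕ) : uSeq N (i+1) = uSeq N i + N i + i + 2 := rfl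

lemma uSeq_block_lt_succ (N : ℕ → ℕ) (i : ℕ) : uSeq N i + i + 1 < uSeq N (i+1) := by
  rw [uSeq_succ_eq]; omega

lemma uSeq_strictMono (N : ℕ → ℕ) : StrictMono (uSeq N) :=
  strictMono_nat_of_lt_succ fun i => by rw [uSeq_succ_eq]; omega

lemma uSeq_block_mono (N : ℕ → ℕ) {i j : ℕ} (h : i ≤ j) :
    uSeq N i + i ≤ uSeq N j + j :=
  Nat.add_le_add ((uSeq_strictMono N).monotone h) h

lemma le_uSeq (N : ℕ → ℕ) (i : ℕ) : i ≤ uSeq N i := by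
  induction i with
  | zero => simp [uSeq]
  | succ i ih => rw [uSeq_succ_eq]; omega

lemma sum_le_uSeq (N : ℕ → ℕ) (i : ℕ) : ∑ j ∈ Finset.range i, N j ≤ uSeq N i := by
  induction i with
  | zero => simp [uSeq]
  | succ i ih => rw [Finset.sum_range_succ, uSeq_succ_eq]; omega

lemma not_constrained_gap (N : ℕ → ℕ) (hNpos : ∀ n, 0 < N n) (i : ℕ) :
    ¬ constrainedPos N (uSeq N i + i + 2) := by
  rintro ⟨j, hj1, hj2⟩
  rcases Nat.lt_or_ge j (i+1) with h | h
  · have : uSeq N j + j ≤ uSeq N i + i := uSeq_block_mono N (by omega)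
    omega
  · have h1 : uSeq N (i+1) ≤ uSeq N j := (uSeq_strictMono N).monotone h
    have := hNpos i
    rw [uSeq_succ_eq] at h1
    omega

lemma unconstrained_infinite (N : ℕ → ℕ) (hNpos : ∀ n, 0 < N n) :
    {k | ¬ constrainedPos N k}.Infinite := by
  apply Set.infinite_of_forall_exists_gt
  intro a
  refine ⟨uSeq N a + a + 2, not_constrained_gap N hNpos a, ?_⟩
  have := le_uSeq N a; omega

open Classical in
lemma constr_count_small (N : ℕ → ℕ) (hNpos : ∀ n, 0 < N n)
    (hN : Tendsto (fun M : ℕ => (M : ℝ) ^ 2 / ∑ n ∈ Finset.range M, (N n : ℝ))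
      atTop (nhds 0)) :
    ∀ ε : ℝ, 0 < ε → ∀ᶠ n : ℕ in atTop,
      ((((Finset.range n).filter (constrainedPos N)).card : ℝ)) ≤ ε * n := by
  intro ε hε
  have h16 : (0:ℝ) < ε / 16 := by positivity
  obtain ⟨M₀, hM₀⟩ : ∃ M₀ : ℕ, ∀ M ≥ M₀,
      (M : ℝ) ^ 2 / ∑ n ∈ Finset.range M, (N n : ℝ) < ε/16 := by
    have := (hN.eventually (gt_mem_nhds h16))
    rw [eventually_atTop] at this
    exact this
  set M₁ := max M₀ 2 with hM₁
  filter_upwards [eventually_ge_atTop (uSeq N M₁ + 1)] with n hn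
  have hex : ∃ I, n ≤ uSeq N I := ⟨n, le_uSeq N n⟩
  set I := Nat.find hex with hI
  have hIn : n ≤ uSeq N I := Nat.find_spec hex
  have hIgt : M₁ + 1 ≤ I := by
    by_contra h
    have : n ≤ uSeq N M₁ := le_trans hIn ((uSeq_strictMono N).monotone (by omega))
    omega
  have hIprev : uSeq N (I - 1) < n := by
    have := Nat.find_min hex (m := I - 1) (by omega)
    omega
  have hcard : ((Finset.range n).filter (constrainedPos N)).card
      ≤ ∑ i ∈ Finset.range I, (i + 2) := by
    have hsub : (Finset.range n).filter (constrainedPos N) ⊆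
        (Finset.range I).biUnion (fun i => Finset.Icc (uSeq N i) (uSeq N i + i + 1)) := by
      intro k hk
      simp only [Finset.mem_filter, Finset.mem_range] at hk
      obtain ⟨hkn, i, hik1, hik2⟩ := hk
      simp only [Finset.mem_biUnion, Finset.mem_range, Finset.mem_Icc]
      refine ⟨i, ?_, hik1, hik2⟩
      by_contra h
      have : uSeq N I ≤ uSeq N i := (uSeq_strictMono N).monotone (by omega)
      omega
    calc ((Finset.range n).filter (constrainedPos N)).card
        ≤ _ := Finset.card_le_card hsub
      _ ≤ ∑ i ∈ Finset.range I, (Finset.Icc (uSeq N i) (uSeq N i + i + 1)).card :=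
          Finset.card_biUnion_le
      _ ≤ ∑ i ∈ Finset.range I, (i + 2) := by
          apply Finset.sum_le_sum
          intro i _
          rw [Nat.card_Icc]
          omega
  have hsumIle : ∑ i ∈ Finset.range I, (i + 2) ≤ (I + 2)^2 := by
    calc ∑ i ∈ Finset.range I, (i + 2) ≤ ∑ _i ∈ Finset.range I, (I + 2) := by
          apply Finset.sum_le_sum; intro i hi; simp at hi; omega
      _ = I * (I + 2) := by rw [Finset.sum_const, Finset.card_range]; ring
      _ ≤ (I + 2)^2 := by nlinarith
  set M := I - 1 with hM
  have hMge : M₀ ≤ M := by omega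
  have hM2 : 2 ≤ M := by omega
  have hsumpos : (0:ℝ) < ∑ j ∈ Finset.range M, (N j : ℝ) := by
    apply Finset.sum_pos
    · intro j _
      exact_mod_cast hNpos j
    · exact Finset.nonempty_range_iff.2 (by omega)
  have hMest : (M:ℝ)^2 < ε/16 * ∑ j ∈ Finset.range M, (N j : ℝ) := by
    have := hM₀ M hMge
    rw [div_lt_iff₀ hsumpos] at this
    linarith
  have hsumn : (∑ j ∈ Finset.range M, (N j : ℝ)) ≤ n := by
    have h1 : ∑ j ∈ Finset.range M, N j ≤ uSeq N M := sum_le_uSeq N M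
    have h2 : uSeq N M ≤ uSeq N (I-1) := le_of_eq (by rw [hM])
    have : (∑ j ∈ Finset.range M, N j : ℕ) ≤ n := by omega
    calc (∑ j ∈ Finset.range M, (N j : ℝ))
        = ((∑ j ∈ Finset.range M, N j : ℕ) : ℝ) := by push_cast; ring
      _ ≤ n := by exact_mod_cast this
  have hI4 : (I:ℝ) + 2 ≤ 4 * M := by
    have : I + 2 ≤ 4 * M := by omega
    exact_mod_cast this
  calc ((((Finset.range n).filter (constrainedPos N)).card : ℝ))
      ≤ ((I + 2)^2 : ℕ) := by exact_mod_cast le_trans hcard hsumIle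
    _ = ((I:ℝ) + 2)^2 := by push_cast; ring
    _ ≤ (4 * M)^2 := by
        apply pow_le_pow_left₀ (by positivity) hI4
    _ = 16 * (M:ℝ)^2 := by ring
    _ ≤ 16 * (ε/16 * ∑ j ∈ Finset.range M, (N j : ℝ)) := by nlinarith
    _ = ε * ∑ j ∈ Finset.range M, (N j : ℝ) := by ring
    _ ≤ ε * n := by
        apply mul_le_mul_of_nonneg_left hsumn (le_of_lt hε)

/-! ### Auxiliary lemmas: geometry of the iterated function system -/

section Geometry

variable {m w : ℕ}
  {S : Fin m → EuclideanSpace ℝ (Fin w) → EuclideanSpace ℝ (Fin w)}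
  {c : Fin m → ℝ}
  {K : Set (EuclideanSpace ℝ (Fin w))}
  {π : (ℕ → Fin m) → EuclideanSpace ℝ (Fin w)}

lemma iterComp_dist (hS : ∀ i x y, dist (S i x) (S i y) = c i * dist x y)
    (s : ℕ → Fin m) (n : ℕ) (x y : EuclideanSpace ℝ (Fin w)) :
    dist (iterComp S s n x) (iterComp S s n y) =
      (∏ k ∈ Finset.range (n+1), c (s k)) * dist x y := by
  induction n generalizing x y with
  | zero => simp [iterComp, hS]
  | succ n ih =>
      show dist (iterComp S s n (S (s (n+1)) x)) (iterComp S s n (S (s (n+1)) y)) = _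
      rw [ih, hS, Finset.prod_range_succ (fun k => c (s k)) (n+1)]
      ring

lemma iterComp_image_subset (hSK : ∀ i, S i '' K ⊆ K) (s : ℕ → Fin m) (n : ℕ) :
    iterComp S s n '' K ⊆ K := by
  induction n with
  | zero => exact hSK (s 0)
  | succ n ih =>
      show (iterComp S s n ∘ S (s (n+1))) '' K ⊆ K
      rw [Set.image_comp]
      exact (Set.image_mono (hSK _)).trans ih

lemma pi_mem (hπ : ∀ s, (⋂ n, iterComp S s n '' K) = {π s}) (t : ℕ → Fin m) (n : ℕ) :
    π t ∈ iterComp S t n '' K := by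
  have : π t ∈ ⋂ n, iterComp S t n '' K := by rw [hπ t]; rfl
  exact Set.mem_iInter.1 this n

lemma pi_mem_K (hSK : ∀ i, S i '' K ⊆ K)
    (hπ : ∀ s, (⋂ n, iterComp S s n '' K) = {π s}) (t : ℕ → Fin m) : π t ∈ K :=
  iterComp_image_subset hSK t 0 (pi_mem hπ t 0)

lemma iterComp_congr {s t : ℕ → Fin m} {n : ℕ} (h : ∀ k, k ≤ n → s k = t k) :
    iterComp S s n = iterComp S t n := by
  induction n with
  | zero => show S (s 0) = S (t 0); rw [h 0 le_rfl]
  | succ n ih =>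
      show iterComp S s n ∘ S (s (n+1)) = iterComp S t n ∘ S (t (n+1))
      rw [h (n+1) le_rfl, ih (fun k hk => h k (hk.trans (Nat.le_succ n)))]

lemma pi_dist_le (hc : ∀ i, c i ∈ Set.Ioo (0 : ℝ) 1)
    (hS : ∀ i x y, dist (S i x) (S i y) = c i * dist x y)
    (hKc : IsCompact K) (hSK : ∀ i, S i '' K ⊆ K)
    (hπ : ∀ s, (⋂ n, iterComp S s n '' K) = {π s})
    {s t : ℕ → Fin m} {n : ℕ} (h : ∀ k, k < n → s k = t k) :
    dist (π s) (π t) ≤ (∏ k ∈ Finset.range n, c (s k)) * Metric.diam K := by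
  cases n with
  | zero =>
      simp only [Finset.range_zero, Finset.prod_empty, one_mul]
      exact Metric.dist_le_diam_of_mem hKc.isBounded (pi_mem_K hSK hπ s) (pi_mem_K hSK hπ t)
  | succ n =>
      have h1 : π s ∈ iterComp S s n '' K := pi_mem hπ s n
      have h2 : π t ∈ iterComp S s n '' K := by
        rw [iterComp_congr (fun k hk => h k (by omega))]
        exact pi_mem hπ t n
      obtain ⟨x, hx, hxe⟩ := h1
      obtain ⟨y, hy, hye⟩ := h2
      rw [← hxe, ← hye, iterComp_dist hS]
      have : dist x y ≤ Metric.diam K := Metric.dist_le_diam_of_mem hKc.isBounded hx hy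
      apply mul_le_mul_of_nonneg_left this
      apply Finset.prod_nonneg
      intro k _
      exact (hc (s k)).1.le

lemma iterComp_shift (S : Fin m → EuclideanSpace ℝ (Fin w) → EuclideanSpace ℝ (Fin w))
    (s : ℕ → Fin m) (n : ℕ) :
    iterComp S s (n+1) = S (s 0) ∘ iterComp S (fun k => s (k+1)) n := by
  induction n with
  | zero => rfl
  | succ n ih =>
      show iterComp S s (n+1) ∘ S (s (n+2)) = _
      rw [ih]
      rfl

lemma pi_shift (hSK : ∀ i, S i '' K ⊆ K)
    (hπ : ∀ s, (⋂ n, iterComp S s n '' K) = {π s}) (t : ℕ → Fin m) :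
    π t = S (t 0) (π (fun k => t (k+1))) := by
  have hmem : S (t 0) (π (fun k => t (k+1))) ∈ ⋂ n, iterComp S t n '' K := by
    rw [Set.mem_iInter]
    intro n
    cases n with
    | zero => exact ⟨π (fun k => t (k+1)), pi_mem_K hSK hπ _, rfl⟩
    | succ n =>
        rw [iterComp_shift, Set.image_comp]
        exact Set.mem_image_of_mem _ (pi_mem hπ _ n)
  rw [hπ t] at hmem
  exact hmem.symm

lemma pi_sep (hc : ∀ i, c i ∈ Set.Ioo (0 : ℝ) 1)
    (hS : ∀ i x y, dist (S i x) (S i y) = c i * dist x y)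
    (hSK : ∀ i, S i '' K ⊆ K)
    (hπ : ∀ s, (⋂ n, iterComp S s n '' K) = {π s})
    {δ : ℝ} (hδ : ∀ i j, i ≠ j → ∀ p ∈ S i '' K, ∀ q ∈ S j '' K, δ ≤ dist p q) :
    ∀ (n : ℕ) (s t : ℕ → Fin m), (∀ k, k < n → s k = t k) → s n ≠ t n →
      δ * ∏ k ∈ Finset.range n, c (s k) ≤ dist (π s) (π t) := by
  intro n
  induction n with
  | zero =>
      intro s t _ hne
      simp only [Finset.range_zero, Finset.prod_empty, mul_one]
      exact hδ (s 0) (t 0) hne _ (pi_mem hπ s 0) _ (pi_mem hπ t 0)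
  | succ n ih =>
      intro s t hag hne
      have h0 : s 0 = t 0 := hag 0 (by omega)
      rw [pi_shift hSK hπ s, pi_shift hSK hπ t, ← h0, hS]
      have := ih (fun k => s (k+1)) (fun k => t (k+1))
        (fun k hk => hag (k+1) (by omega)) hne
      calc δ * ∏ k ∈ Finset.range (n+1), c (s k)
          = (δ * ∏ k ∈ Finset.range n, c (s (k+1))) * c (s 0) := by
            rw [Finset.prod_range_succ']; ring
        _ ≤ dist (π fun k => s (k+1)) (π fun k => t (k+1)) * c (s 0) := by
            apply mul_le_mul_of_nonneg_right this (hc (s 0)).1.le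
        _ = c (s 0) * dist (π fun k => s (k+1)) (π fun k => t (k+1)) := by ring

lemma exists_sep (hm : 2 ≤ m) (hKc : IsCompact K)
    (hdisj : ∀ i j, i ≠ j → Disjoint (S i '' K) (S j '' K))
    (hScont : ∀ i x y, dist (S i x) (S i y) = c i * dist x y) :
    ∃ δ > 0, ∀ i j, i ≠ j → ∀ p ∈ S i '' K, ∀ q ∈ S j '' K, δ ≤ dist p q := by
  have hScont' : ∀ i, Continuous (S i) := by
    intro i
    apply LipschitzWith.continuous (K := Real.toNNReal (c i))
    intro x y
    rw [edist_dist, edist_dist, hScont]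
    rw [← ENNReal.ofReal_coe_nnreal]
    rw [← ENNReal.ofReal_mul (by positivity)]
    apply ENNReal.ofReal_le_ofReal
    have h1 : (Real.toNNReal (c i) : ℝ) = max (c i) 0 := rfl
    rw [h1]
    have := dist_nonneg (x := x) (y := y)
    nlinarith [le_max_left (c i) 0]
  have key : ∀ p : Fin m × Fin m, ∃ d : ℝ, 0 < d ∧
      (p.1 ≠ p.2 → ∀ x ∈ S p.1 '' K, ∀ y ∈ S p.2 '' K, d ≤ dist x y) := by
    rintro ⟨i, j⟩
    by_cases hij : i = j
    · exact ⟨1, one_pos, fun h => absurd hij h⟩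
    · have hci : IsCompact (S i '' K) := hKc.image (hScont' i)
      have hcj : IsCompact (S j '' K) := hKc.image (hScont' j)
      obtain ⟨d, hd, hdisj'⟩ := (hdisj i j hij).exists_thickenings hci hcj.isClosed
      refine ⟨d, hd, fun _ x hx y hy => ?_⟩
      by_contra hlt
      push_neg at hlt
      have hxy : y ∈ Metric.thickening d (S i '' K) :=
        Metric.mem_thickening_iff.2 ⟨x, hx, by rwa [dist_comm] at hlt⟩
      have hyy : y ∈ Metric.thickening d (S j '' K) :=
        Metric.self_subset_thickening hd _ hy
      exact (Set.disjoint_iff.1 hdisj') ⟨hxy, hyy⟩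
  choose d hd hsep using key
  have hne : (Finset.univ : Finset (Fin m × Fin m)).Nonempty := by
    have : 0 < m := by omega
    exact ⟨(⟨0, this⟩, ⟨0, this⟩), Finset.mem_univ _⟩
  refine ⟨Finset.univ.inf' hne d, ?_, ?_⟩
  · apply (Finset.lt_inf'_iff hne).2
    intro p _
    exact hd p
  · intro i j hij p hp q hq
    exact le_trans (Finset.inf'_le d (Finset.mem_univ (i, j))) (hsep (i, j) hij p hp q hq)

lemma prMap_measurable (s : ℕ → Fin m) (N : ℕ → ℕ) : Measurable (prMap s N) := by
  apply measurable_pi_lambda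
  intro k
  by_cases h1 : flipPos N k
  · simp only [prMap, if_pos h1]
    exact measurable_const
  · by_cases h2 : constrainedPos N k
    · simp only [prMap, if_neg h1, if_pos h2]
      exact measurable_const
    · simp only [prMap, if_neg h1, if_neg h2]
      exact measurable_pi_apply _

lemma pi_measurable (hm : 2 ≤ m)
    (hc : ∀ i, c i ∈ Set.Ioo (0 : ℝ) 1)
    (hS : ∀ i x y, dist (S i x) (S i y) = c i * dist x y)
    (hKc : IsCompact K) (hKne : K.Nonempty)
    (hπ : ∀ s, (⋂ n, iterComp S s n '' K) = {π s}) :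
    Measurable π := by
  obtain ⟨x₀, hx₀⟩ := hKne
  set cmax : ℝ := Finset.univ.sup' ⟨⟨0, by omega⟩, Finset.mem_univ _⟩ c with hcmax
  have hcmax1 : cmax < 1 := by
    apply (Finset.sup'_lt_iff _).2
    intro i _
    exact (hc i).2
  have hcmax0 : 0 < cmax := by
    have h1 : c ⟨0, by omega⟩ ≤ cmax := Finset.le_sup' _ (Finset.mem_univ _)
    have h2 := (hc ⟨0, by omega⟩).1
    linarith
  set g : ℕ → (ℕ → Fin m) → EuclideanSpace ℝ (Fin w) :=
    fun n t => iterComp S t n x₀ with hg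
  have hgmeas : ∀ n, Measurable (g n) := by
    intro n
    have heq : g n = (fun v : Fin (n+1) → Fin m =>
        iterComp S (fun k => v ⟨min k n, by omega⟩) n x₀) ∘
        (fun t k => t (k : ℕ)) := by
      funext t
      simp only [hg, Function.comp]
      have hco : ∀ k, k ≤ n → t k = t (min k n) := fun k hk => by rw [Nat.min_eq_left hk]
      exact congrFun (iterComp_congr (S := S) hco) x₀
    rw [heq]
    exact (measurable_of_countable _).comp
      (measurable_pi_lambda _ (fun i => measurable_pi_apply _))
  apply measurable_of_tendsto_metrizable hgmeas
  rw [tendsto_pi_nhds]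
  intro t
  rw [tendsto_iff_dist_tendsto_zero]
  apply squeeze_zero (fun n => dist_nonneg)
    (g := fun n => cmax ^ (n+1) * Metric.diam K)
  · intro n
    obtain ⟨y, hy, hye⟩ := pi_mem hπ t n
    calc dist (g n t) (π t) = dist (iterComp S t n x₀) (iterComp S t n y) := by rw [hye]
      _ = (∏ k ∈ Finset.range (n+1), c (t k)) * dist x₀ y := iterComp_dist hS t n x₀ y
      _ ≤ cmax ^ (n+1) * Metric.diam K := by
          apply mul_le_mul
          · calc ∏ k ∈ Finset.range (n+1), c (t k)
                ≤ ∏ _k ∈ Finset.range (n+1), cmax :=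
                  Finset.prod_le_prod (fun k _ => (hc (t k)).1.le)
                    (fun k _ => Finset.le_sup' _ (Finset.mem_univ _))
              _ = cmax ^ (n+1) := by rw [Finset.prod_const, Finset.card_range]
          · exact Metric.dist_le_diam_of_mem hKc.isBounded hx₀ hy
          · exact dist_nonneg
          · positivity
  · have h1 : Tendsto (fun n : ℕ => cmax ^ n * Metric.diam K) atTop
        (nhds (0 * Metric.diam K)) :=
      Tendsto.mul_const _ (tendsto_pow_atTop_nhds_zero_of_lt_one hcmax0.le hcmax1)
    rw [zero_mul] at h1
    exact h1.comp (tendsto_add_atTop_nat 1)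

end Geometry

/-! ### Auxiliary lemmas: the map `prMap` and cylinders -/

section PrMap

variable {m : ℕ}

open Classical in
lemma prMap_constrained {s : ℕ → Fin m} {N : ℕ → ℕ} {t : ℕ → Fin m}
    (ht : t ∈ sigmaSet s N) (a : ℕ → Fin m) {k : ℕ} (hk : constrainedPos N k) :
    prMap s N a k = t k := by
  by_cases h1 : flipPos N k
  · obtain ⟨i, rfl⟩ := h1
    have := (ht i).2
    simp only [prMap]
    rw [if_pos ⟨i, rfl⟩, this]
  · obtain ⟨i, hik1, hik2⟩ := hk
    have hik2' : k ≤ uSeq N i + i := by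
      rcases Nat.lt_or_ge k (uSeq N i + i + 1) with h | h
      · omega
      · exfalso; exact h1 ⟨i, by omega⟩
    have := (ht i).1 k hik1 hik2'
    simp only [prMap]
    rw [if_neg h1, if_pos ⟨i, hik1, by omega⟩, this]

open Classical in
lemma prMap_unconstrained (s : ℕ → Fin m) (N : ℕ → ℕ) (a : ℕ → Fin m) {k : ℕ}
    (hk : ¬ constrainedPos N k) :
    prMap s N a k = a (Nat.count (fun j => ¬ constrainedPos N j) k) := by
  have h1 : ¬ flipPos N k := by
    rintro ⟨i, rfl⟩
    exact hk ⟨i, by omega, le_rfl⟩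
  simp only [prMap]
  rw [if_neg h1, if_neg hk]

open Classical in
lemma prMap_cyl_iff {s : ℕ → Fin m} {N : ℕ → ℕ} {t : ℕ → Fin m}
    (ht : t ∈ sigmaSet s N)
    (hinf : {k | ¬ constrainedPos N k}.Infinite)
    (a : ℕ → Fin m) (n : ℕ) :
    (∀ k, k < n → prMap s N a k = t k) ↔
      (∀ j, j < Nat.count (fun j => ¬ constrainedPos N j) n →
        a j = t (Nat.nth (fun j => ¬ constrainedPos N j) j)) := by
  set U := fun j => ¬ constrainedPos N j with hU
  constructor
  · intro h j hj
    have hnth_lt : Nat.nth U j < n := Nat.nth_lt_of_lt_count hj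
    have hnth_mem : U (Nat.nth U j) := Nat.nth_mem_of_infinite hinf j
    have h2 := h _ hnth_lt
    rw [prMap_unconstrained s N a hnth_mem] at h2
    rwa [Nat.count_nth_of_infinite hinf] at h2
  · intro h k hk
    by_cases hck : constrainedPos N k
    · exact prMap_constrained ht a hck
    · rw [prMap_unconstrained s N a hck]
      have hlt : Nat.count U k < Nat.count U n := Nat.count_strict_mono hck hk
      have h2 := h _ hlt
      rwa [Nat.nth_count hck] at h2

open Classical in
lemma measure_cyl {c : Fin m → ℝ} {D : ℝ}
    {ν : Measure (ℕ → Fin m)}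
    (hν : ∀ (n : ℕ) (aw : Fin n → Fin m),
      ν {t : ℕ → Fin m | ∀ i : Fin n, t (i : ℕ) = aw i} =
        ∏ i : Fin n, ENNReal.ofReal (c (aw i) ^ D))
    {s : ℕ → Fin m} {N : ℕ → ℕ} {t : ℕ → Fin m}
    (ht : t ∈ sigmaSet s N)
    (hinf : {k | ¬ constrainedPos N k}.Infinite) (n : ℕ) :
    ν {a : ℕ → Fin m | ∀ k, k < n → prMap s N a k = t k}
      = ∏ k ∈ (Finset.range n).filter (fun k => ¬ constrainedPos N k),
          ENNReal.ofReal (c (t k) ^ D) := by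
  set U := fun j => ¬ constrainedPos N j with hU
  set q := Nat.count U n with hq
  have hset : {a : ℕ → Fin m | ∀ k, k < n → prMap s N a k = t k}
      = {a : ℕ → Fin m |
          ∀ i : Fin q, a (i : ℕ) = (fun i : Fin q => t (Nat.nth U (i : ℕ))) i} := by
    ext a
    rw [mem_setOf_eq, prMap_cyl_iff ht hinf a n]
    exact ⟨fun h i => h i i.2, fun h j hj => h ⟨j, hj⟩⟩
  rw [hset, hν q (fun i : Fin q => t (Nat.nth U (i : ℕ)))]
  rw [Fin.prod_univ_eq_prod_range (fun j => ENNReal.ofReal (c (t (Nat.nth U j)) ^ D)) q]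
  apply Finset.prod_bij (fun j _ => Nat.nth U j)
  · intro j hj
    rw [Finset.mem_range] at hj
    rw [Finset.mem_filter, Finset.mem_range]
    exact ⟨Nat.nth_lt_of_lt_count hj, Nat.nth_mem_of_infinite hinf j⟩
  · intro a _ b _ h
    exact Nat.nth_injective hinf h
  · intro k hk
    rw [Finset.mem_filter, Finset.mem_range] at hk
    exact ⟨Nat.count U k, Finset.mem_range.2 (Nat.count_strict_mono hk.2 hk.1),
      Nat.nth_count hk.2⟩
  · intro j _
    rfl

end PrMap

set_option maxHeartbeats 2000000 in
theorem local_dimension_ge (m w : ℕ) (hm : 2 ≤ m)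
    (S : Fin m → EuclideanSpace ℝ (Fin w) → EuclideanSpace ℝ (Fin w))
    (c : Fin m → ℝ) (hc : ∀ i, c i ∈ Set.Ioo (0 : ℝ) 1)
    (hS : ∀ i x y, dist (S i x) (S i y) = c i * dist x y)
    (K : Set (EuclideanSpace ℝ (Fin w))) (hKc : IsCompact K) (hKne : K.Nonempty)
    (hSK : ∀ i, S i '' K ⊆ K)
    (hdisj : ∀ i j, i ≠ j → Disjoint (S i '' K) (S j '' K))
    (π : (ℕ → Fin m) → EuclideanSpace ℝ (Fin w))
    (hπ : ∀ s, (⋂ n, iterComp S s n '' K) = {π s})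
    (D : ℝ) (hD : 0 < D) (hDeq : ∑ i, c i ^ D = 1)
    (s : ℕ → Fin m) (N : ℕ → ℕ) (hNpos : ∀ n, 0 < N n)
    (hN : Tendsto (fun M : ℕ => (M : ℝ) ^ 2 / ∑ n ∈ Finset.range M, (N n : ℝ))
      atTop (nhds 0))
    (ν : Measure (ℕ → Fin m)) (hνprob : IsProbabilityMeasure ν)
    (hν : ∀ (n : ℕ) (aw : Fin n → Fin m),
      ν {t : ℕ → Fin m | ∀ i : Fin n, t (i : ℕ) = aw i} =
        ∏ i : Fin n, ENNReal.ofReal (c (aw i) ^ D)) :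
    ∀ x ∈ π '' sigmaSet s N,
      D ≤ liminf (fun ρ : ℝ =>
          Real.log ((Measure.map π (Measure.map (prMap s N) ν)) (Metric.ball x ρ)).toReal /
            Real.log ρ)
        (nhdsWithin (0 : ℝ) (Set.Ioi 0)) := by
  classical
  rintro x ⟨t, ht, rfl⟩
  -- basic constants
  have h0m : 0 < m := by omega
  have huniv : (Finset.univ : Finset (Fin m)).Nonempty := ⟨⟨0, h0m⟩, Finset.mem_univ _⟩
  set cmin : ℝ := Finset.univ.inf' huniv c with hcmin_def
  set cmax : ℝ := Finset.univ.sup' huniv c with hcmax_def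
  have hcmin_le : ∀ i, cmin ≤ c i := fun i => Finset.inf'_le _ (Finset.mem_univ _)
  have hle_cmax : ∀ i, c i ≤ cmax := fun i => Finset.le_sup' _ (Finset.mem_univ _)
  have hcmin0 : 0 < cmin := (Finset.lt_inf'_iff _).2 fun i _ => (hc i).1
  have hcmax1 : cmax < 1 := (Finset.sup'_lt_iff _).2 fun i _ => (hc i).2
  have hcmin1 : cmin < 1 := lt_of_le_of_lt (hcmin_le ⟨0, h0m⟩) (hc _).2
  have hcmax0 : 0 < cmax := lt_of_lt_of_le (hc ⟨0, h0m⟩).1 (hle_cmax _)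
  -- separation constant
  obtain ⟨δ₁, hδ₁pos, hsep₁⟩ := exists_sep hm hKc hdisj hS
  set δ : ℝ := min δ₁ 1 with hδdef
  have hδ0 : 0 < δ := lt_min hδ₁pos one_pos
  have hδ1 : δ ≤ 1 := min_le_right _ _
  have hsep : ∀ i j, i ≠ j → ∀ p ∈ S i '' K, ∀ q ∈ S j '' K, δ ≤ dist p q :=
    fun i j hij p hp q hq => le_trans (min_le_left _ _) (hsep₁ i j hij p hp q hq)
  have hlogδ : Real.log δ ≤ 0 := Real.log_nonpos hδ0.le hδ1
  -- measurability and the measure μ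
  have hπmeas : Measurable π := pi_measurable hm hc hS hKc hKne hπ
  have hprmeas : Measurable (prMap s N) := prMap_measurable s N
  set μ := Measure.map π (Measure.map (prMap s N) ν) with hμdef
  have hμball : ∀ ρ : ℝ, μ (Metric.ball (π t) ρ) =
      ν {a | π (prMap s N a) ∈ Metric.ball (π t) ρ} := by
    intro ρ
    rw [hμdef, Measure.map_apply hπmeas measurableSet_ball,
      Measure.map_apply hprmeas (hπmeas measurableSet_ball)]
    rfl
  have hμfin : ∀ ρ : ℝ, μ (Metric.ball (π t) ρ) ≤ 1 := by
    intro ρ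
    rw [hμball]
    exact prob_le_one
  -- diameter is positive
  set dK := Metric.diam K with hdKdef
  have hdK0 : 0 < dK := by
    obtain ⟨p, hp⟩ := hKne.image (S ⟨0, h0m⟩)
    obtain ⟨q, hq⟩ := hKne.image (S ⟨1, by omega⟩)
    have hne01 : (⟨0, h0m⟩ : Fin m) ≠ ⟨1, by omega⟩ := by simp [Fin.ext_iff]
    have h1 : δ ≤ dist p q := hsep _ _ hne01 p hp q hq
    have h2 : dist p q ≤ dK := Metric.dist_le_diam_of_mem hKc.isBounded (hSK _ hp) (hSK _ hq)
    linarith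
  -- products along t
  set P : ℕ → ℝ := fun n => ∏ k ∈ Finset.range n, c (t k) with hPdef
  have hP0 : ∀ n, 0 < P n := fun n => Finset.prod_pos fun k _ => (hc (t k)).1
  have hPsucc : ∀ n, P (n+1) = P n * c (t n) := fun n => Finset.prod_range_succ _ n
  have hPanti : ∀ a b : ℕ, a ≤ b → P b ≤ P a := by
    intro a b hab
    have hsp : P (a + (b - a)) = P a * ∏ k ∈ Finset.range (b - a), c (t (a + k)) := by
      rw [hPdef]
      exact Finset.prod_range_add _ a (b - a)
    rw [show b = a + (b - a) by omega, hsp]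
    have h1 : ∏ k ∈ Finset.range (b - a), c (t (a + k)) ≤ 1 :=
      Finset.prod_le_one (fun k _ => (hc _).1.le) (fun k _ => (hc _).2.le)
    have h2 : (0:ℝ) ≤ ∏ k ∈ Finset.range (b - a), c (t (a + k)) :=
      Finset.prod_nonneg fun k _ => (hc _).1.le
    nlinarith [hP0 a]
  have hPle : ∀ n, P n ≤ cmax ^ n := by
    intro n
    calc P n ≤ ∏ _k ∈ Finset.range n, cmax :=
        Finset.prod_le_prod (fun k _ => (hc _).1.le) (fun k _ => hle_cmax _)
      _ = cmax ^ n := by rw [Finset.prod_const, Finset.card_range]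
  have hP1 : ∀ n, P n ≤ 1 := fun n => le_trans (hPle n) (pow_le_one₀ hcmax0.le hcmax1.le)
  have hinf : {k | ¬ constrainedPos N k}.Infinite := unconstrained_infinite N hNpos
  set F : ℕ → ℕ := fun n => ((Finset.range n).filter (constrainedPos N)).card with hFdef
  -- measure of cylinders
  have hcylprod : ∀ n : ℕ,
      ν {a : ℕ → Fin m | ∀ k, k < n → prMap s N a k = t k}
        = ENNReal.ofReal (∏ k ∈ (Finset.range n).filter (fun k => ¬ constrainedPos N k),
            c (t k) ^ D) := by
    intro n
    rw [measure_cyl hν ht hinf n, ENNReal.ofReal_prod_of_nonneg]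
    intro i _
    exact Real.rpow_nonneg (hc _).1.le _
  -- inclusion of the ball preimage in a cylinder
  have hs_ball_sub : ∀ n : ℕ, ∀ ρ : ℝ, 0 < ρ → ρ < δ * P n →
      {a : ℕ → Fin m | π (prMap s N a) ∈ Metric.ball (π t) ρ}
        ⊆ {a : ℕ → Fin m | ∀ k, k < n → prMap s N a k = t k} := by
    intro n ρ hρ hρn a ha
    simp only [mem_setOf_eq, Metric.mem_ball] at ha ⊢
    intro k hk
    by_contra hne
    have hexk : ∃ j, prMap s N a j ≠ t j := ⟨k, hne⟩
    have hk₀spec : prMap s N a (Nat.find hexk) ≠ t (Nat.find hexk) := Nat.find_spec hexk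
    have hk₀le : Nat.find hexk ≤ k := Nat.find_min' hexk hne
    have hag : ∀ j, j < Nat.find hexk → prMap s N a j = t j := fun j hj =>
      not_not.1 (Nat.find_min hexk hj)
    have hd := pi_sep hc hS hSK hπ hsep (Nat.find hexk) (prMap s N a) t hag hk₀spec
    have hprod : ∏ j ∈ Finset.range (Nat.find hexk), c (prMap s N a j) = P (Nat.find hexk) :=
      Finset.prod_congr rfl fun j hj => by rw [hag j (Finset.mem_range.1 hj)]
    rw [hprod] at hd
    have h1 : δ * P n ≤ δ * P (Nat.find hexk) :=
      mul_le_mul_of_nonneg_left (hPanti _ _ (by omega)) hδ0.le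
    linarith only [ha, hd, h1, hρn]
  -- inclusion of a cylinder in the ball preimage
  have hball_sub : ∀ n : ℕ, ∀ ρ : ℝ, dK * P n < ρ →
      {a : ℕ → Fin m | ∀ k, k < n → prMap s N a k = t k}
        ⊆ {a : ℕ → Fin m | π (prMap s N a) ∈ Metric.ball (π t) ρ} := by
    intro n ρ hρ a ha
    simp only [mem_setOf_eq, Metric.mem_ball] at ha ⊢
    have hd := pi_dist_le hc hS hKc hSK hπ (s := prMap s N a) (t := t) (n := n) ha
    have hprod : ∏ j ∈ Finset.range n, c (prMap s N a j) = P n :=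
      Finset.prod_congr rfl fun j hj => by rw [ha j (Finset.mem_range.1 hj)]
    rw [hprod] at hd
    calc dist (π (prMap s N a)) (π t) ≤ P n * dK := hd
      _ = dK * P n := by ring
      _ < ρ := hρ
  -- product estimates
  have hprod_upper : ∀ n : ℕ,
      ∏ k ∈ (Finset.range n).filter (fun k => ¬ constrainedPos N k), c (t k) ^ D
        ≤ P n ^ D * ((cmin ^ D)⁻¹) ^ F n := by
    intro n
    have hsplit := Finset.prod_filter_mul_prod_filter_not (Finset.range n)
      (constrainedPos N) (fun k => c (t k) ^ D)
    have hprodD : ∏ k ∈ Finset.range n, c (t k) ^ D = P n ^ D := by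
      rw [hPdef]
      simp only []
      rw [Real.finset_prod_rpow _ _ (fun k _ => (hc _).1.le)]
    have hBge : (cmin ^ D) ^ F n
        ≤ ∏ k ∈ (Finset.range n).filter (constrainedPos N), c (t k) ^ D := by
      calc (cmin ^ D) ^ F n
          = ∏ _k ∈ (Finset.range n).filter (constrainedPos N), cmin ^ D := by
            rw [Finset.prod_const, hFdef]
        _ ≤ _ := Finset.prod_le_prod (fun k _ => Real.rpow_nonneg hcmin0.le _)
            (fun k _ => Real.rpow_le_rpow hcmin0.le (hcmin_le _) hD.le)
    have hA0 : 0 ≤ ∏ k ∈ (Finset.range n).filter (fun k => ¬ constrainedPos N k),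
        c (t k) ^ D := Finset.prod_nonneg fun k _ => Real.rpow_nonneg (hc _).1.le _
    have hcD : 0 < (cmin ^ D) ^ F n := pow_pos (Real.rpow_pos_of_pos hcmin0 _) _
    rw [inv_pow, ← div_eq_mul_inv, le_div_iff₀ hcD]
    calc (∏ k ∈ (Finset.range n).filter (fun k => ¬ constrainedPos N k), c (t k) ^ D)
          * (cmin ^ D) ^ F n
        ≤ (∏ k ∈ (Finset.range n).filter (fun k => ¬ constrainedPos N k), c (t k) ^ D)
          * ∏ k ∈ (Finset.range n).filter (constrainedPos N), c (t k) ^ D :=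
          mul_le_mul_of_nonneg_left hBge hA0
      _ = P n ^ D := by rw [mul_comm, hsplit, hprodD]
  have hprod_lower : ∀ n : ℕ,
      (cmin ^ D) ^ n ≤ ∏ k ∈ (Finset.range n).filter (fun k => ¬ constrainedPos N k),
        c (t k) ^ D := by
    intro n
    have hsplit := Finset.prod_filter_mul_prod_filter_not (Finset.range n)
      (constrainedPos N) (fun k => c (t k) ^ D)
    have h1 : ∏ k ∈ (Finset.range n).filter (constrainedPos N), c (t k) ^ D ≤ 1 :=
      Finset.prod_le_one (fun k _ => Real.rpow_nonneg (hc _).1.le _)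
        (fun k _ => Real.rpow_le_one (hc _).1.le (hc _).2.le hD.le)
    have h2 : (cmin ^ D) ^ n ≤ ∏ k ∈ Finset.range n, c (t k) ^ D := by
      calc (cmin ^ D) ^ n = ∏ _k ∈ Finset.range n, cmin ^ D := by
            rw [Finset.prod_const, Finset.card_range]
        _ ≤ _ := Finset.prod_le_prod (fun k _ => Real.rpow_nonneg hcmin0.le _)
            (fun k _ => Real.rpow_le_rpow hcmin0.le (hcmin_le _) hD.le)
    have hA0 : 0 ≤ ∏ k ∈ (Finset.range n).filter (fun k => ¬ constrainedPos N k),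
        c (t k) ^ D := Finset.prod_nonneg fun k _ => Real.rpow_nonneg (hc _).1.le _
    nlinarith [hsplit, h1, h2, hA0]
  -- the two key measure bounds
  have key_upper : ∀ n : ℕ, ∀ ρ : ℝ, 0 < ρ → ρ < δ * P n →
      (μ (Metric.ball (π t) ρ)).toReal ≤ P n ^ D * ((cmin ^ D)⁻¹) ^ F n := by
    intro n ρ h1 h2
    have h3 : μ (Metric.ball (π t) ρ) ≤ ENNReal.ofReal (P n ^ D * ((cmin ^ D)⁻¹) ^ F n) := by
      rw [hμball]
      calc ν {a | π (prMap s N a) ∈ Metric.ball (π t) ρ}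
          ≤ ν {a : ℕ → Fin m | ∀ k, k < n → prMap s N a k = t k} :=
            measure_mono (hs_ball_sub n ρ h1 h2)
        _ = _ := hcylprod n
        _ ≤ _ := ENNReal.ofReal_le_ofReal (hprod_upper n)
    apply ENNReal.toReal_le_of_le_ofReal _ h3
    have := Real.rpow_nonneg (hP0 n).le D
    have := pow_nonneg (inv_nonneg.2 (Real.rpow_nonneg hcmin0.le D)) (F n)
    nlinarith
  have key_lower : ∀ n : ℕ, ∀ ρ : ℝ, dK * P n < ρ →
      (cmin ^ D) ^ n ≤ (μ (Metric.ball (π t) ρ)).toReal := by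
    intro n ρ h1
    have h3 : ENNReal.ofReal ((cmin ^ D) ^ n) ≤ μ (Metric.ball (π t) ρ) := by
      rw [hμball]
      calc ENNReal.ofReal ((cmin ^ D) ^ n)
          ≤ ENNReal.ofReal (∏ k ∈ (Finset.range n).filter (fun k => ¬ constrainedPos N k),
              c (t k) ^ D) := ENNReal.ofReal_le_ofReal (hprod_lower n)
        _ = ν {a : ℕ → Fin m | ∀ k, k < n → prMap s N a k = t k} := (hcylprod n).symm
        _ ≤ _ := measure_mono (hball_sub n ρ h1)
    have h4 : μ (Metric.ball (π t) ρ) ≠ ⊤ :=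
      (lt_of_le_of_lt (hμfin ρ) ENNReal.one_lt_top).ne
    calc (cmin ^ D) ^ n = (ENNReal.ofReal ((cmin ^ D) ^ n)).toReal :=
        (ENNReal.toReal_ofReal (pow_nonneg (Real.rpow_nonneg hcmin0.le _) _)).symm
      _ ≤ _ := ENNReal.toReal_mono h4 h3
  -- choose J with cmax ^ J * dK < δ
  obtain ⟨J, hJ⟩ : ∃ J : ℕ, cmax ^ J * dK < δ := by
    have h1 : Tendsto (fun n : ℕ => cmax ^ n * dK) atTop (nhds (0 * dK)) :=
      Tendsto.mul_const _ (tendsto_pow_atTop_nhds_zero_of_lt_one hcmax0.le hcmax1)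
    rw [zero_mul] at h1
    exact (h1.eventually (gt_mem_nhds hδ0)).exists
  have hPJ : ∀ n : ℕ, dK * P (n + 1 + J) ≤ dK * P (n+1) * cmax ^ J := by
    intro n
    have h1 : P (n+1+J) = P (n+1) * ∏ k ∈ Finset.range J, c (t (n+1+k)) := by
      rw [hPdef]
      simp only []
      rw [Finset.prod_range_add]
    rw [h1]
    have h2 : ∏ k ∈ Finset.range J, c (t (n+1+k)) ≤ cmax ^ J := by
      calc ∏ k ∈ Finset.range J, c (t (n+1+k)) ≤ ∏ _k ∈ Finset.range J, cmax :=
          Finset.prod_le_prod (fun _ _ => (hc _).1.le) (fun _ _ => hle_cmax _)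
        _ = cmax ^ J := by rw [Finset.prod_const, Finset.card_range]
    have h4 : dK * P (n+1) * ∏ k ∈ Finset.range J, c (t (n+1+k))
        ≤ dK * P (n+1) * cmax ^ J :=
      mul_le_mul_of_nonneg_left h2 (mul_nonneg hdK0.le (hP0 _).le)
    rw [← mul_assoc]
    exact h4
  -- logarithmic constants
  set L : ℝ := -Real.log cmin with hLdef
  set L' : ℝ := -Real.log cmax with hL'def
  have hLpos : 0 < L := by
    have := Real.log_neg hcmin0 hcmin1
    rw [hLdef]; linarith
  have hL'pos : 0 < L' := by
    have := Real.log_neg hcmax0 hcmax1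
    rw [hL'def]; linarith
  -- the four basic log facts at scale n
  have hfacts : ∀ n : ℕ, ∀ ρ : ℝ, 0 < ρ → δ * P (n+1) ≤ ρ → ρ < δ * P n →
      Real.log (μ (Metric.ball (π t) ρ)).toReal
          ≤ D * Real.log (P n) + (F n : ℝ) * (D * L)
      ∧ -((((n:ℝ) + 1 + J)) * (D * L)) ≤ Real.log (μ (Metric.ball (π t) ρ)).toReal
      ∧ Real.log δ + Real.log (P n) - L ≤ Real.log ρ
      ∧ Real.log ρ ≤ Real.log δ - (n:ℝ) * L' := by
    intro n ρ hρ0 hlow hup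
    have hdlow : dK * P (n+1+J) < ρ := by
      have h1 : dK * P (n+1) * cmax ^ J = (cmax ^ J * dK) * P (n+1) := by ring
      have h2 : (cmax ^ J * dK) * P (n+1) < δ * P (n+1) :=
        mul_lt_mul_of_pos_right hJ (hP0 (n+1))
      calc dK * P (n+1+J) ≤ dK * P (n+1) * cmax ^ J := hPJ n
        _ = (cmax ^ J * dK) * P (n+1) := h1
        _ < δ * P (n+1) := h2
        _ ≤ ρ := hlow
    have hbub := key_upper n ρ hρ0 hup
    have hblb := key_lower (n+1+J) ρ hdlow
    have hcDpos : 0 < cmin ^ D := Real.rpow_pos_of_pos hcmin0 _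
    have hbpos : 0 < (μ (Metric.ball (π t) ρ)).toReal :=
      lt_of_lt_of_le (pow_pos hcDpos _) hblb
    refine ⟨?_, ?_, ?_, ?_⟩
    · -- upper log bound
      have h1 := Real.log_le_log hbpos hbub
      have h2 : Real.log (P n ^ D * ((cmin ^ D)⁻¹) ^ F n)
          = D * Real.log (P n) + (F n : ℝ) * (D * L) := by
        rw [Real.log_mul (Real.rpow_pos_of_pos (hP0 n) D).ne'
          (pow_pos (inv_pos.2 hcDpos) _).ne', Real.log_rpow (hP0 n),
          Real.log_pow, Real.log_inv, Real.log_rpow hcmin0, hLdef]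
        ring
      clear_value L L'
      linarith only [h1, h2]
    · -- lower log bound
      have h1 := Real.log_le_log (pow_pos hcDpos _) hblb
      have h2 : Real.log ((cmin ^ D) ^ (n+1+J)) = -(((n:ℝ) + 1 + J) * (D * L)) := by
        rw [Real.log_pow, Real.log_rpow hcmin0, hLdef]
        push_cast
        ring
      clear_value L L'
      linarith only [h1, h2]
    · -- lower bound for log ρ
      have h1 : Real.log (δ * P (n+1)) ≤ Real.log ρ :=
        Real.log_le_log (mul_pos hδ0 (hP0 (n+1))) hlow
      have h2 : Real.log (δ * P (n+1)) = Real.log δ + Real.log (P n) + Real.log (c (t n)) := by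
        rw [hPsucc n, Real.log_mul hδ0.ne' (mul_pos (hP0 n) (hc (t n)).1).ne',
          Real.log_mul (hP0 n).ne' (hc (t n)).1.ne']
        ring
      have h3 : Real.log cmin ≤ Real.log (c (t n)) := Real.log_le_log hcmin0 (hcmin_le _)
      rw [hLdef]
      linarith only [h1, h2, h3]
    · -- upper bound for log ρ
      have h1 : Real.log ρ ≤ Real.log (δ * P n) := Real.log_le_log hρ0 hup.le
      have h2 : Real.log (δ * P n) = Real.log δ + Real.log (P n) :=
        Real.log_mul hδ0.ne' (hP0 n).ne'
      have h3 : Real.log (P n) ≤ (n:ℝ) * Real.log cmax := by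
        have h4 : Real.log (P n) = ∑ k ∈ Finset.range n, Real.log (c (t k)) := by
          rw [hPdef]
          simp only []
          exact Real.log_prod (fun k _ => (hc _).1.ne')
        rw [h4]
        calc ∑ k ∈ Finset.range n, Real.log (c (t k))
            ≤ ∑ _k ∈ Finset.range n, Real.log cmax :=
              Finset.sum_le_sum fun k _ => Real.log_le_log (hc _).1 (hle_cmax _)
          _ = (n:ℝ) * Real.log cmax := by
              rw [Finset.sum_const, Finset.card_range, nsmul_eq_mul]
      rw [hL'def]
      linarith only [h1, h2, h3]
  -- existence of the scale n for small ρ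
  have hscale : ∀ ρ : ℝ, 0 < ρ → ρ < δ → ∃ n : ℕ, δ * P (n+1) ≤ ρ ∧ ρ < δ * P n := by
    intro ρ h1 h2
    have hex : ∃ k, δ * P k ≤ ρ := by
      have h3 : Tendsto (fun k : ℕ => cmax ^ k) atTop (nhds 0) :=
        tendsto_pow_atTop_nhds_zero_of_lt_one hcmax0.le hcmax1
      obtain ⟨k, hk⟩ := (h3.eventually (gt_mem_nhds (show (0:ℝ) < ρ/δ by positivity))).exists
      refine ⟨k, ?_⟩
      have h4 : δ * P k ≤ δ * cmax ^ k := mul_le_mul_of_nonneg_left (hPle k) hδ0.le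
      have h5 : δ * cmax ^ k < δ * (ρ / δ) := mul_lt_mul_of_pos_left hk hδ0
      have h6 : δ * (ρ / δ) = ρ := by field_simp
      linarith
    have h1find : 0 < Nat.find hex := by
      rcases Nat.eq_zero_or_pos (Nat.find hex) with h | h
      · exfalso
        have h7 := Nat.find_spec hex
        rw [h] at h7
        have h8 : P 0 = 1 := Finset.prod_range_zero _
        rw [h8, mul_one] at h7
        linarith
      · exact h
    refine ⟨Nat.find hex - 1, ?_, ?_⟩
    · have h7 := Nat.find_spec hex
      rwa [show Nat.find hex - 1 + 1 = Nat.find hex by omega]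
    · have h7 := Nat.find_min hex (m := Nat.find hex - 1) (by omega)
      exact lt_of_not_ge h7
  -- notation for the function in the statement
  set f : ℝ → ℝ := fun ρ =>
    Real.log (μ (Metric.ball (π t) ρ)).toReal / Real.log ρ with hfdef
  -- eventual upper bound for f (coboundedness)
  have claimB : ∀ᶠ ρ in nhdsWithin (0:ℝ) (Set.Ioi 0),
      f ρ ≤ ((J:ℝ) + 2) * (D * L) / L' := by
    set Cb : ℝ := ((J:ℝ) + 2) * (D * L) / L' with hCb
    have hCb0 : 0 ≤ Cb := by positivity
    have he1 : Cb * L' = ((J:ℝ) + 2) * (D * L) := by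
      rw [hCb]; field_simp
    have hρ₀pos : 0 < δ * P 1 := mul_pos hδ0 (hP0 1)
    filter_upwards [Ioo_mem_nhdsGT_of_mem (Set.left_mem_Ico.2 hρ₀pos)] with ρ hρ
    obtain ⟨hρ0, hρδP⟩ := hρ
    have hP1lt : P 1 < 1 := by
      have := hPsucc 0
      have h8 : P 0 = 1 := Finset.prod_range_zero _
      rw [h8, one_mul] at this
      rw [this]
      exact (hc (t 0)).2
    have hρδ : ρ < δ := by nlinarith [hδ0]
    obtain ⟨n, hlow, hup⟩ := hscale ρ hρ0 hρδ
    have hn1 : 1 ≤ n := by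
      by_contra h
      push_neg at h
      have hn0 : n = 0 := by omega
      subst hn0
      have e : P (0+1) = P 1 := rfl
      linarith [hlow, hρδP, e.le, e.ge]
    obtain ⟨f1, f2, f3, f4⟩ := hfacts n ρ hρ0 hlow hup
    have hρ1 : ρ < 1 := lt_of_lt_of_le hρδ hδ1
    have hlogρneg : Real.log ρ < 0 := Real.log_neg hρ0 hρ1
    show Real.log (μ (Metric.ball (π t) ρ)).toReal / Real.log ρ ≤ Cb
    rw [div_le_iff_of_neg hlogρneg]
    have hn1' : (1:ℝ) ≤ (n:ℝ) := by exact_mod_cast hn1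
    have hDL : 0 < D * L := mul_pos hD hLpos
    calc Cb * Real.log ρ ≤ Cb * (-((n:ℝ) * L')) := by
          apply mul_le_mul_of_nonneg_left _ hCb0
          clear_value δ L L'
          linarith only [f4, hlogδ]
      _ = -((n:ℝ) * (Cb * L')) := by ring
      _ = -((n:ℝ) * (((J:ℝ) + 2) * (D * L))) := by rw [he1]
      _ ≤ -(((n:ℝ) + 1 + J) * (D * L)) := by
          have hnj : ((n:ℝ) + 1 + J) ≤ (n:ℝ) * ((J:ℝ) + 2) := by
            nlinarith [mul_nonneg (sub_nonneg.2 hn1') (Nat.cast_nonneg J : (0:ℝ) ≤ (J:ℝ))]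
          have h9 := mul_le_mul_of_nonneg_right hnj hDL.le
          linarith only [h9]
      _ ≤ Real.log (μ (Metric.ball (π t) ρ)).toReal := f2
  -- eventual lower bound for f
  have claimU : ∀ ε : ℝ, 0 < ε →
      ∀ᶠ ρ in nhdsWithin (0:ℝ) (Set.Ioi 0), D - ε ≤ f ρ := by
    intro ε hε
    set ε₁ : ℝ := ε * L' / (2 * (D * L)) with hε₁
    have hDL : 0 < D * L := mul_pos hD hLpos
    have hε₁pos : 0 < ε₁ := by positivity
    obtain ⟨n₁, hn₁⟩ := eventually_atTop.1 (constr_count_small N hNpos hN ε₁ hε₁pos)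
    obtain ⟨n₂, hn₂⟩ := exists_nat_ge
      ((D * (L - Real.log δ) + ε * Real.log δ) / (ε * L' / 2))
    set n₃ : ℕ := max (max n₁ n₂) 1 with hn₃
    have hρ₀pos : 0 < δ * P n₃ := mul_pos hδ0 (hP0 n₃)
    filter_upwards [Ioo_mem_nhdsGT_of_mem (Set.left_mem_Ico.2 hρ₀pos)] with ρ hρ
    obtain ⟨hρ0, hρδP⟩ := hρ
    have hρδ : ρ < δ := by nlinarith [hP1 n₃, hP0 n₃, hδ0]
    obtain ⟨n, hlow, hup⟩ := hscale ρ hρ0 hρδ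
    have hn₃n : n₃ ≤ n := by
      by_contra h
      push_neg at h
      have h9 : P n₃ ≤ P (n+1) := hPanti _ _ (by omega)
      nlinarith [hδ0]
    obtain ⟨f1, f2, f3, f4⟩ := hfacts n ρ hρ0 hlow hup
    have hρ1 : ρ < 1 := lt_of_lt_of_le hρδ hδ1
    have hlogρneg : Real.log ρ < 0 := Real.log_neg hρ0 hρ1
    show D - ε ≤ Real.log (μ (Metric.ball (π t) ρ)).toReal / Real.log ρ
    rw [le_div_iff_of_neg hlogρneg]
    have hFn : (F n : ℝ) ≤ ε₁ * n :=
      hn₁ n (le_trans (le_trans (le_max_left _ _) (le_max_left _ _)) hn₃n)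
    have hA : D * Real.log (P n) ≤ D * (Real.log ρ - Real.log δ + L) :=
      mul_le_mul_of_nonneg_left (by linarith [f3]) hD.le
    have hB : (F n : ℝ) * (D * L) ≤ (ε * L' / 2) * n := by
      have h1 : (F n : ℝ) * (D * L) ≤ ε₁ * n * (D * L) :=
        mul_le_mul_of_nonneg_right hFn hDL.le
      have h2 : ε₁ * (D * L) = ε * L' / 2 := by
        rw [hε₁]; field_simp
      calc (F n : ℝ) * (D * L) ≤ ε₁ * n * (D * L) := h1
        _ = (ε₁ * (D * L)) * n := by ring
        _ = (ε * L' / 2) * n := by rw [h2]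
    have hC : ε * Real.log ρ ≤ ε * (Real.log δ - (n:ℝ) * L') :=
      mul_le_mul_of_nonneg_left f4 hε.le
    have hD6 : D * (L - Real.log δ) + ε * Real.log δ ≤ (ε * L' / 2) * n := by
      have h1 : ((n₂:ℝ)) ≤ (n:ℝ) := by
        exact_mod_cast le_trans (le_trans (le_max_right _ _) (le_max_left _ _)) hn₃n
      have hpos2 : (0:ℝ) < ε * L' / 2 := by positivity
      have h2 : D * (L - Real.log δ) + ε * Real.log δ ≤ (ε * L' / 2) * n₂ := by
        have h3 := hn₂
        rw [div_le_iff₀ hpos2] at h3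
        linarith
      calc D * (L - Real.log δ) + ε * Real.log δ ≤ (ε * L' / 2) * (n₂:ℝ) := h2
        _ ≤ (ε * L' / 2) * (n:ℝ) := mul_le_mul_of_nonneg_left h1 hpos2.le
    clear_value L L'
    linarith only [f1, hA, hB, hC, hD6]
  -- conclusion
  have hcob : IsCoboundedUnder (· ≥ ·) (nhdsWithin (0:ℝ) (Set.Ioi 0)) f :=
    Filter.IsCoboundedUnder.of_frequently_le claimB.frequently
  apply le_of_forall_sub_le
  intro ε hε
  exact Filter.le_liminf_of_le hcob (claimU ε hε)

end
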